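/- Let 0 < ε < 1, d ≥ 1, and suppose the tail condition P[η(0) ≥ t] ≥ c/(log t)^d holds for all large t, where η(0) is a nonnegative integer random variable. Define b_r := C r^{d−1} Π_{k=1}^r (1 − P[η(0) > ε^{−k}]/2)^{c' k^{d−1}} for constants C, c' > 0. If c is sufficiently large (depending on d, ε, c'), then Σ_{r≥1} b_r < ∞. -/

import Mathlib

open MeasureTheory

private lemma log_succ_sub_le (k : ℕ) (hk : 1 ≤ k) :
    Real.log (k + 1) - Real.log k ≤ 1 / k := by
  have hk0 : (0:ℝ) < k := by exact_mod_cast hk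
  have h : Real.log ((k + 1) / k) ≤ (k + 1) / k - 1 :=
    Real.log_le_sub_one_of_pos (by positivity)
  rw [Real.log_div (by positivity) (by positivity)] at h
  have : ((k:ℝ) + 1) / k - 1 = 1 / k := by field_simp; ring
  linarith [h, this ▸ h]

private lemma harmonic_lb (k₁ : ℕ) (hk₁ : 1 ≤ k₁) :
    ∀ r : ℕ, k₁ ≤ r →
      Real.log (r + 1) - Real.log k₁ ≤ ∑ k ∈ Finset.Icc k₁ r, (1:ℝ) / k := by
  intro r
  induction r with
  | zero => intro h; omega
  | succ n ih =>
    intro h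
    rcases Nat.lt_or_ge n k₁ with hn | hn
    · -- k₁ = n + 1
      have hk : k₁ = n + 1 := by omega
      subst hk
      simp only [Finset.Icc_self, Finset.sum_singleton]
      push_cast
      have := log_succ_sub_le (n + 1) (by omega)
      push_cast at this
      linarith
    · have step := log_succ_sub_le (n + 1) (by omega)
      rw [Finset.sum_Icc_succ_top (by omega)]
      have ihn := ih hn
      push_cast at step ⊢
      push_cast at ihn
      linarith

set_option maxHeartbeats 1000000

/-- Let `0 < ε < 1`, `d ≥ 1`, and suppose the `ℕ`-valued random variable
`η(0)` satisfies the tail bound `P[η(0) ≥ t] ≥ c/(log t)^d` for all large `t`. With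
`b_r := C r^{d-1} ∏_{k=1}^r (1 - P[η(0) > ε^{-k}]/2)^{c' k^{d-1}}` for constants `C, c' > 0`,
if `c` is sufficiently large (depending on `d, ε, c'`) then `∑_{r ≥ 1} b_r < ∞`. -/
theorem stmt14 (d : ℕ) (hd : 1 ≤ d) (ε : ℝ) (hε0 : 0 < ε) (hε1 : ε < 1)
    (C c' : ℝ) (hC : 0 < C) (hc' : 0 < c') :
    ∃ c₀ : ℝ, 0 < c₀ ∧ ∀ c : ℝ, c₀ ≤ c →
      ∀ (Ω : Type) (_ : MeasurableSpace Ω) (P : Measure Ω), IsProbabilityMeasure P →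
        ∀ η : Ω → ℕ, Measurable η →
          (∃ t₀ : ℝ, ∀ t : ℝ, t₀ ≤ t →
            c / (Real.log t) ^ d ≤ (P {ω | t ≤ (η ω : ℝ)}).toReal) →
          Summable (fun r : ℕ =>
            C * (r : ℝ) ^ (d - 1) *
              ∏ k ∈ Finset.Icc 1 r,
                (1 - (P {ω | ε ^ (-(k : ℝ)) < (η ω : ℝ)}).toReal / 2) ^
                  (c' * (k : ℝ) ^ (d - 1))) := by
  -- the constant L : log(ε^{-k}+1) ≤ k L for k ≥ 1
  set L : ℝ := Real.log 2 + Real.log ε⁻¹ with hLdef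
  have hlog2 : (0:ℝ) < Real.log 2 := Real.log_pos (by norm_num)
  have hlogεinv : (0:ℝ) < Real.log ε⁻¹ :=
    Real.log_pos (by rw [lt_inv_comm₀ (by norm_num) hε0]; simpa using hε1)
  have hL : 0 < L := by positivity
  refine ⟨2 * (d + 1) * L ^ d / c', by positivity, ?_⟩
  intro c hc Ω mΩ P hP η hη ⟨t₀, ht⟩
  have hc0 : 0 < c := lt_of_lt_of_le (by positivity) hc
  have hβ : (d + 1 : ℝ) ≤ c * c' / (2 * L ^ d) := by
    have hc2 : 2 * ((d:ℝ) + 1) * L ^ d ≤ c * c' := by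
      rw [div_le_iff₀ hc'] at hc; linarith
    rw [le_div_iff₀ (by positivity)]
    nlinarith
  -- k₁ : threshold index
  set k₁ : ℕ := max 1 ⌈Real.log t₀ / L⌉₊ with hk₁def
  have hk₁1 : 1 ≤ k₁ := le_max_left _ _
  have hk₁L : Real.log t₀ ≤ k₁ * L := by
    have h1 : Real.log t₀ / L ≤ (⌈Real.log t₀ / L⌉₊ : ℝ) := Nat.le_ceil _
    have h2 : (⌈Real.log t₀ / L⌉₊ : ℝ) ≤ (k₁ : ℝ) := by
      exact_mod_cast le_max_right 1 ⌈Real.log t₀ / L⌉₊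
    calc Real.log t₀ = (Real.log t₀ / L) * L := by field_simp
      _ ≤ (k₁ : ℝ) * L := by
          apply mul_le_mul_of_nonneg_right (h1.trans h2) hL.le
  -- notation for the probabilities
  set p : ℕ → ℝ := fun k => (P {ω | ε ^ (-(k : ℝ)) < (η ω : ℝ)}).toReal with hpdef
  have hp0 : ∀ k, 0 ≤ p k := fun k => ENNReal.toReal_nonneg
  have hp1 : ∀ k, p k ≤ 1 := by
    intro k
    exact ENNReal.toReal_le_of_le_ofReal zero_le_one (by simpa using prob_le_one (μ := P))
  -- key probability lower bound
  have key : ∀ k : ℕ, k₁ ≤ k → c / L ^ d * (1 / k) ≤ (k : ℝ) ^ (d - 1) * p k := by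
    intro k hk
    have hk1 : 1 ≤ k := hk₁1.trans hk
    have hk0 : (0:ℝ) < k := by exact_mod_cast hk1
    set x : ℝ := ε ^ (-(k : ℝ)) with hxdef
    have hx1 : 1 ≤ x := Real.one_le_rpow_of_pos_of_le_one_of_nonpos hε0 hε1.le
      (neg_nonpos.mpr (Nat.cast_nonneg k))
    set t : ℝ := max t₀ (x + 1) with htdef
    have htt₀ : t₀ ≤ t := le_max_left _ _
    have htx : x + 1 ≤ t := le_max_right _ _
    have ht2 : (2:ℝ) ≤ t := by linarith
    have hlogt_pos : 0 < Real.log t := Real.log_pos (by linarith)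
    -- log t ≤ k * L
    have hlogx : Real.log x = (k : ℝ) * Real.log ε⁻¹ := by
      rw [hxdef, Real.log_rpow hε0, Real.log_inv]; ring
    have hlogt : Real.log t ≤ (k : ℝ) * L := by
      rcases max_cases t₀ (x + 1) with ⟨he, hle⟩ | ⟨he, hlt⟩
      · rw [htdef, he]
        calc Real.log t₀ ≤ (k₁ : ℝ) * L := hk₁L
          _ ≤ (k : ℝ) * L := by
              apply mul_le_mul_of_nonneg_right _ hL.le
              exact_mod_cast hk
      · rw [htdef, he]
        have h2x : x + 1 ≤ 2 * x := by linarith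
        calc Real.log (x + 1) ≤ Real.log (2 * x) :=
              Real.log_le_log (by linarith) h2x
          _ = Real.log 2 + Real.log x := Real.log_mul (by norm_num) (by linarith)
          _ = Real.log 2 + (k : ℝ) * Real.log ε⁻¹ := by rw [hlogx]
          _ ≤ (k : ℝ) * Real.log 2 + (k : ℝ) * Real.log ε⁻¹ := by
              have : (1:ℝ) ≤ (k : ℝ) := by exact_mod_cast hk1
              nlinarith
          _ = (k : ℝ) * L := by rw [hLdef]; ring
    -- tail bound at t
    have htail := ht t htt₀
    have hsub : {ω | t ≤ (η ω : ℝ)} ⊆ {ω | ε ^ (-(k : ℝ)) < (η ω : ℝ)} := by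
      intro ω hω
      simp only [Set.mem_setOf_eq] at hω ⊢
      calc ε ^ (-(k:ℝ)) = x := rfl
        _ < x + 1 := by linarith
        _ ≤ t := htx
        _ ≤ _ := hω
    have hmono : (P {ω | t ≤ (η ω : ℝ)}).toReal ≤ p k :=
      ENNReal.toReal_mono (measure_ne_top P _) (measure_mono hsub)
    have hdiv : c / ((k : ℝ) * L) ^ d ≤ c / (Real.log t) ^ d := by
      apply div_le_div_of_nonneg_left hc0.le (by positivity)
      exact pow_le_pow_left₀ hlogt_pos.le hlogt d
    have hpk : c / ((k : ℝ) * L) ^ d ≤ p k := hdiv.trans (htail.trans hmono)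
    -- convert : k^{d-1} * (c/(kL)^d) = (c/L^d)(1/k)
    have hkd : (k : ℝ) ^ d = (k : ℝ) ^ (d - 1) * k := by
      conv_lhs => rw [show d = (d - 1) + 1 by omega]
      rw [pow_succ]
    have heq : c / L ^ d * (1 / k) = (k : ℝ) ^ (d - 1) * (c / ((k : ℝ) * L) ^ d) := by
      rw [mul_pow, hkd]
      field_simp
    rw [heq]
    exact mul_le_mul_of_nonneg_left hpk (by positivity)
  -- the sum lower bound
  have Slb : ∀ r : ℕ,
      c / L ^ d * (Real.log (r + 1) - Real.log k₁) ≤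
        ∑ k ∈ Finset.Icc 1 r, (k : ℝ) ^ (d - 1) * p k := by
    intro r
    have hsum_nonneg : ∀ s : Finset ℕ, 0 ≤ ∑ k ∈ s, (k : ℝ) ^ (d - 1) * p k := by
      intro s; apply Finset.sum_nonneg; intro k _; exact mul_nonneg (by positivity) (hp0 k)
    rcases Nat.lt_or_ge r k₁ with hr | hr
    · have : Real.log (r + 1) ≤ Real.log k₁ := by
        apply Real.log_le_log (by positivity)
        exact_mod_cast Nat.succ_le_of_lt hr
      have h1 : c / L ^ d * (Real.log (r + 1) - Real.log k₁) ≤ 0 :=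
        mul_nonpos_of_nonneg_of_nonpos (by positivity) (by linarith)
      exact h1.trans (hsum_nonneg _)
    · have hsubset : Finset.Icc k₁ r ⊆ Finset.Icc 1 r := by
        apply Finset.Icc_subset_Icc_left hk₁1
      have h1 : ∑ k ∈ Finset.Icc k₁ r, (k : ℝ) ^ (d - 1) * p k ≤
          ∑ k ∈ Finset.Icc 1 r, (k : ℝ) ^ (d - 1) * p k := by
        apply Finset.sum_le_sum_of_subset_of_nonneg hsubset
        intro k _ _; exact mul_nonneg (by positivity) (hp0 k)
      have h2 : ∑ k ∈ Finset.Icc k₁ r, c / L ^ d * (1 / (k:ℝ)) ≤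
          ∑ k ∈ Finset.Icc k₁ r, (k : ℝ) ^ (d - 1) * p k := by
        apply Finset.sum_le_sum
        intro k hk
        exact key k (Finset.mem_Icc.mp hk).1
      have h3 : c / L ^ d * (Real.log (r + 1) - Real.log k₁) ≤
          ∑ k ∈ Finset.Icc k₁ r, c / L ^ d * (1 / (k:ℝ)) := by
        rw [← Finset.mul_sum]
        exact mul_le_mul_of_nonneg_left (harmonic_lb k₁ hk₁1 r hr) (by positivity)
      linarith
  -- the per-r bound on b_r
  set A : ℝ := Real.exp (c' / 2 * (c / L ^ d) * Real.log k₁) with hAdef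
  have hA : 0 < A := Real.exp_pos _
  have bbound : ∀ r : ℕ,
      C * (r : ℝ) ^ (d - 1) *
        ∏ k ∈ Finset.Icc 1 r,
          (1 - p k / 2) ^ (c' * (k : ℝ) ^ (d - 1)) ≤
      C * A / ((r : ℝ) + 1) ^ 2 := by
    intro r
    have hr1 : (0:ℝ) < (r : ℝ) + 1 := by positivity
    -- product ≤ exp of sum
    have hprod : ∏ k ∈ Finset.Icc 1 r, (1 - p k / 2) ^ (c' * (k : ℝ) ^ (d - 1)) ≤
        Real.exp (-(c' / 2) * ∑ k ∈ Finset.Icc 1 r, (k : ℝ) ^ (d - 1) * p k) := by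
      have : Real.exp (-(c' / 2) * ∑ k ∈ Finset.Icc 1 r, (k : ℝ) ^ (d - 1) * p k) =
          ∏ k ∈ Finset.Icc 1 r, Real.exp (-(p k / 2) * (c' * (k : ℝ) ^ (d - 1))) := by
        rw [← Real.exp_sum]
        congr 1
        rw [Finset.mul_sum]
        apply Finset.sum_congr rfl
        intro k _
        ring
      rw [this]
      apply Finset.prod_le_prod
      · intro k _
        apply Real.rpow_nonneg
        have := hp1 k; linarith
      · intro k _
        have hbase : 1 - p k / 2 ≤ Real.exp (-(p k / 2)) := by
          have := Real.add_one_le_exp (-(p k / 2)); linarith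
        have hbase0 : 0 ≤ 1 - p k / 2 := by have := hp1 k; linarith
        calc (1 - p k / 2) ^ (c' * (k : ℝ) ^ (d - 1)) ≤
              (Real.exp (-(p k / 2))) ^ (c' * (k : ℝ) ^ (d - 1)) :=
              Real.rpow_le_rpow hbase0 hbase (by positivity)
          _ = Real.exp (-(p k / 2) * (c' * (k : ℝ) ^ (d - 1))) := by
              rw [← Real.exp_log (Real.exp_pos _) ]
              rw [Real.log_exp]
              rw [Real.rpow_def_of_pos (Real.exp_pos _), Real.log_exp]
    -- exp bound via Slb
    have hexp : Real.exp (-(c' / 2) * ∑ k ∈ Finset.Icc 1 r, (k : ℝ) ^ (d - 1) * p k) ≤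
        A * Real.exp (-((d:ℝ) + 1) * Real.log ((r:ℝ) + 1)) := by
      have h1 : -(c' / 2) * ∑ k ∈ Finset.Icc 1 r, (k : ℝ) ^ (d - 1) * p k ≤
          -(c' / 2) * (c / L ^ d * (Real.log (r + 1) - Real.log k₁)) := by
        have := Slb r
        nlinarith [hc'.le]
      have h2 : -(c' / 2) * (c / L ^ d * (Real.log ((r:ℝ) + 1) - Real.log k₁)) =
          c' / 2 * (c / L ^ d) * Real.log k₁ + (-(c * c' / (2 * L ^ d))) * Real.log ((r:ℝ)+1) := by
        field_simp
        ring
      have h3 : (-(c * c' / (2 * L ^ d))) * Real.log ((r:ℝ)+1) ≤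
          -((d:ℝ) + 1) * Real.log ((r:ℝ) + 1) := by
        have hlr : 0 ≤ Real.log ((r:ℝ) + 1) := Real.log_nonneg (by push_cast; linarith)
        nlinarith [hβ]
      calc Real.exp (-(c' / 2) * ∑ k ∈ Finset.Icc 1 r, (k : ℝ) ^ (d - 1) * p k) ≤
            Real.exp (c' / 2 * (c / L ^ d) * Real.log k₁ +
              (-(c * c' / (2 * L ^ d))) * Real.log ((r:ℝ)+1)) := by
            apply Real.exp_le_exp.mpr
            rw [← h2]; exact h1
        _ ≤ Real.exp (c' / 2 * (c / L ^ d) * Real.log k₁ +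
              (-((d:ℝ) + 1)) * Real.log ((r:ℝ)+1)) := by
            apply Real.exp_le_exp.mpr; linarith
        _ = A * Real.exp (-((d:ℝ) + 1) * Real.log ((r:ℝ) + 1)) := by
            rw [hAdef, ← Real.exp_add]
    -- identify exp(-(d+1) log(r+1)) with ((r+1)^(d+1))⁻¹
    have hexp_id : Real.exp (-((d:ℝ) + 1) * Real.log ((r:ℝ) + 1)) =
        (((r:ℝ) + 1) ^ (d + 1))⁻¹ := by
      rw [neg_mul, Real.exp_neg]
      congr 1
      rw [show ((d:ℝ) + 1) = ((d + 1 : ℕ) : ℝ) by push_cast; ring]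
      rw [Real.exp_nat_mul, Real.exp_log hr1]
    -- final arithmetic
    have hfin : C * (r : ℝ) ^ (d - 1) * (A * (((r:ℝ) + 1) ^ (d + 1))⁻¹) ≤
        C * A / ((r : ℝ) + 1) ^ 2 := by
      have hrd : (r : ℝ) ^ (d - 1) ≤ ((r:ℝ) + 1) ^ (d - 1) :=
        pow_le_pow_left₀ (by positivity) (by linarith) _
      have hsplit : ((r:ℝ) + 1) ^ (d + 1) = ((r:ℝ) + 1) ^ (d - 1) * ((r:ℝ) + 1) ^ 2 := by
        rw [← pow_add]
        congr 1
        omega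
      rw [hsplit, div_eq_mul_inv, mul_inv]
      calc C * (r : ℝ) ^ (d - 1) * (A * ((((r:ℝ) + 1) ^ (d - 1))⁻¹ * (((r:ℝ) + 1) ^ 2)⁻¹)) =
            C * A * ((r : ℝ) ^ (d - 1) * (((r:ℝ) + 1) ^ (d - 1))⁻¹) * (((r:ℝ) + 1) ^ 2)⁻¹ := by
            ring
        _ ≤ C * A * 1 * (((r:ℝ) + 1) ^ 2)⁻¹ := by
            apply mul_le_mul_of_nonneg_right _ (by positivity)
            apply mul_le_mul_of_nonneg_left _ (by positivity)
            rw [mul_inv_le_iff₀ (by positivity), one_mul]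
            exact hrd
        _ = C * A * (((r:ℝ) + 1) ^ 2)⁻¹ := by ring
    have hprodnn : (0:ℝ) ≤ C * (r : ℝ) ^ (d - 1) := by positivity
    calc C * (r : ℝ) ^ (d - 1) *
          ∏ k ∈ Finset.Icc 1 r, (1 - p k / 2) ^ (c' * (k : ℝ) ^ (d - 1)) ≤
          C * (r : ℝ) ^ (d - 1) *
            Real.exp (-(c' / 2) * ∑ k ∈ Finset.Icc 1 r, (k : ℝ) ^ (d - 1) * p k) :=
          mul_le_mul_of_nonneg_left hprod hprodnn
      _ ≤ C * (r : ℝ) ^ (d - 1) * (A * Real.exp (-((d:ℝ) + 1) * Real.log ((r:ℝ) + 1))) :=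
          mul_le_mul_of_nonneg_left hexp hprodnn
      _ = C * (r : ℝ) ^ (d - 1) * (A * (((r:ℝ) + 1) ^ (d + 1))⁻¹) := by rw [hexp_id]
      _ ≤ C * A / ((r : ℝ) + 1) ^ 2 := hfin
  -- conclude summability
  have hmaj : Summable (fun r : ℕ => C * A / ((r : ℝ) + 1) ^ 2) := by
    have h2 : Summable (fun n : ℕ => 1 / ((n : ℝ)) ^ 2) :=
      Real.summable_one_div_nat_pow.mpr one_lt_two
    have h3 : Summable (fun n : ℕ => 1 / ((n : ℝ) + 1) ^ 2) := by
      have := (summable_nat_add_iff 1).mpr h2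
      simpa [add_comm] using this
    simpa [div_eq_mul_inv, mul_assoc] using h3.mul_left (C * A)
  apply Summable.of_nonneg_of_le _ bbound hmaj
  intro r
  apply mul_nonneg (by positivity)
  apply Finset.prod_nonneg
  intro k _
  apply Real.rpow_nonneg
  have := hp1 k
  linarith
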